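/- Let H, a, C, f, s be positive reals with s ≥ 1 and suppose H/(a·C·t)·(1 − exp(−f·t)) ≤ 1 for all t in (0, T]. Define p_d(t) = 1 − (1 − (H/(a·C·t))·(1 − exp(−f·t)))^s. Then for 0 < t ≤ T, p_d(t) ≥ p_d(T). -/

import Mathlib

lemma aux_deriv (f : ℝ) {x : ℝ} (hx : 0 < x) :
    HasDerivAt (fun y => (1 - Real.exp (-f * y)) / y)
      ((f * Real.exp (-f * x) * x - (1 - Real.exp (-f * x)) * 1) / x ^ 2) x := by
  have h1 : HasDerivAt (fun y => -f * y) (-f) x := by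
    simpa using (hasDerivAt_id x).const_mul (-f)
  have h2 : HasDerivAt (fun y => 1 - Real.exp (-f * y)) (f * Real.exp (-f * x)) x := by
    have := (h1.exp).const_sub 1
    refine this.congr_deriv ?_
    ring
  exact h2.div (hasDerivAt_id x) (ne_of_gt hx)

lemma aux_key (f : ℝ) (hf : 0 < f) {t T : ℝ} (ht : 0 < t) (htT : t ≤ T) :
    (1 - Real.exp (-f * T)) / T ≤ (1 - Real.exp (-f * t)) / t := by
  have hanti : AntitoneOn (fun y => (1 - Real.exp (-f * y)) / y) (Set.Icc t T) := by
    apply antitoneOn_of_deriv_nonpos (convex_Icc t T)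
    · apply ContinuousOn.div
      · fun_prop
      · fun_prop
      · intro x hx; exact ne_of_gt (lt_of_lt_of_le ht hx.1)
    · intro x hx
      rw [interior_Icc] at hx
      exact (aux_deriv f (lt_trans ht hx.1)).differentiableAt.differentiableWithinAt
    · intro x hx
      rw [interior_Icc] at hx
      have hxpos : 0 < x := lt_trans ht hx.1
      rw [(aux_deriv f hxpos).deriv]
      apply div_nonpos_of_nonpos_of_nonneg _ (sq_nonneg x)
      have h1 : f * x + 1 ≤ Real.exp (f * x) := Real.add_one_le_exp (f * x)
      have h2 : Real.exp (-f * x) * Real.exp (f * x) = 1 := by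
        rw [← Real.exp_add]; ring_nf; exact Real.exp_zero
      nlinarith [Real.exp_pos (-f * x), Real.exp_pos (f * x)]
  have := hanti (Set.left_mem_Icc.mpr (le_trans (le_refl t) htT))
    (Set.right_mem_Icc.mpr htT) htT
  simpa using this

theorem stmt_2 (H a C f s T : ℝ) (hH : 0 < H) (ha : 0 < a) (hC : 0 < C)
    (hf : 0 < f) (hs : 1 ≤ s) (hT : 0 < T)
    (hle : ∀ t ∈ Set.Ioc (0 : ℝ) T, H / (a * C * t) * (1 - Real.exp (-f * t)) ≤ 1)
    (p_d : ℝ → ℝ)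
    (hp_d : ∀ t, p_d t = 1 - (1 - H / (a * C * t) * (1 - Real.exp (-f * t))) ^ s)
    (t : ℝ) (ht : 0 < t) (htT : t ≤ T) :
    p_d t ≥ p_d T := by
  rw [hp_d, hp_d]
  have hBt := hle t ⟨ht, htT⟩
  have hkey := aux_key f hf ht htT
  have hac : 0 < H / (a * C) := div_pos hH (mul_pos ha hC)
  have hrw : ∀ u : ℝ, H / (a * C * u) * (1 - Real.exp (-f * u))
      = H / (a * C) * ((1 - Real.exp (-f * u)) / u) := by
    intro u; field_simp
  have hBle : H / (a * C * T) * (1 - Real.exp (-f * T))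
      ≤ H / (a * C * t) * (1 - Real.exp (-f * t)) := by
    rw [hrw, hrw]
    exact mul_le_mul_of_nonneg_left hkey (le_of_lt hac)
  have h0 : 0 ≤ 1 - H / (a * C * t) * (1 - Real.exp (-f * t)) := by linarith
  have hmono : (1 - H / (a * C * t) * (1 - Real.exp (-f * t))) ^ s
      ≤ (1 - H / (a * C * T) * (1 - Real.exp (-f * T))) ^ s :=
    Real.rpow_le_rpow h0 (by linarith) (by linarith)
  linarith
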